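/- Let H ∈ [3/4,1). Then there exists a constant c_H > 0, independent of λ, such that for every λ ∈ (0,1], one has E[ |X_1|^{1−2H} · |λ X_2 − √(1−λ²) X_1|^{1−2H} ] ≥ c_H · λ^{−(4H−3)}. -/

import Mathlib

open MeasureTheory ProbabilityTheory Real ENNReal

/-- The law of `m` i.i.d. standard Gaussian random variables. -/
noncomputable def stdGaussianPi (m : ℕ) : Measure (Fin m → ℝ) :=
  Measure.pi fun _ => gaussianReal 0 1

/-- `𝕀_{n+1}(λ) = E[ |X_1|^{1−2H} ∏_{i=2}^{n+1} |λ_i X_i − √(1−λ_i²) X_{i−1}|^{1−2H} ]`,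
the expectation (valued in `[0,∞]`) over `n+1` i.i.d. standard Gaussians `X_1, …, X_{n+1}`;
here `X j` stands for `X_{j+1}` and `lam j` for `λ_{j+1}`, `j : Fin (n+1)` (`lam 0` unused). -/
noncomputable def IknE (n : ℕ) (H : ℝ) (lam : Fin (n + 1) → ℝ) : ℝ≥0∞ :=
  ∫⁻ X : Fin (n + 1) → ℝ,
    ENNReal.ofReal (|X 0| ^ (1 - 2 * H) *
      ∏ i : Fin n,
        |lam i.succ * X i.succ - Real.sqrt (1 - (lam i.succ) ^ 2) * X i.castSucc| ^
          (1 - 2 * H)) ∂(stdGaussianPi (n + 1))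

/-- Lower bound on the standard Gaussian measure of an interval inside `[-2,2]`. -/
lemma gauss_Ioc_lb {a b : ℝ} (hab : a ≤ b) (ha : -2 ≤ a) (hb : b ≤ 2) :
    ENNReal.ofReal (((Real.sqrt (2 * Real.pi))⁻¹ * Real.exp (-2)) * (b - a)) ≤
      gaussianReal 0 1 (Set.Ioc a b) := by
  rw [gaussianReal_apply 0 one_ne_zero]
  have hpt : ∀ x ∈ Set.Ioc a b,
      ENNReal.ofReal ((Real.sqrt (2 * Real.pi))⁻¹ * Real.exp (-2)) ≤ gaussianPDF 0 1 x := by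
    intro x hx
    rw [gaussianPDF]
    apply ENNReal.ofReal_le_ofReal
    have hx1 : -2 ≤ x := le_trans ha hx.1.le
    have hx2 : x ≤ 2 := le_trans hx.2 hb
    have hsq : x ^ 2 ≤ 4 := by nlinarith
    have : gaussianPDFReal 0 1 x = (Real.sqrt (2 * Real.pi))⁻¹ * Real.exp (-(x ^ 2) / 2) := by
      simp [gaussianPDFReal]
    rw [this]
    exact mul_le_mul_of_nonneg_left (Real.exp_le_exp.mpr (by linarith)) (by positivity)
  calc ENNReal.ofReal (((Real.sqrt (2 * Real.pi))⁻¹ * Real.exp (-2)) * (b - a))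
      = ENNReal.ofReal ((Real.sqrt (2 * Real.pi))⁻¹ * Real.exp (-2)) * ENNReal.ofReal (b - a) := by
        rw [ENNReal.ofReal_mul (by positivity)]
    _ = ENNReal.ofReal ((Real.sqrt (2 * Real.pi))⁻¹ * Real.exp (-2)) * volume (Set.Ioc a b) := by
        rw [Real.volume_Ioc]
    _ = ∫⁻ _ in Set.Ioc a b, ENNReal.ofReal ((Real.sqrt (2 * Real.pi))⁻¹ * Real.exp (-2)) := by
        rw [setLIntegral_const]
    _ ≤ ∫⁻ x in Set.Ioc a b, gaussianPDF 0 1 x :=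
        setLIntegral_mono' measurableSet_Ioc hpt

/-- For `H ∈ [3/4, 1)` there is `c_H > 0`, independent of `λ`, such
that for every `λ ∈ (0,1]`,
`E[ |X_1|^{1−2H} |λ X_2 − √(1−λ²) X_1|^{1−2H} ] ≥ c_H λ^{−(4H−3)}`. -/
theorem Ik2_lower_bound_rough (H : ℝ) (hH : H ∈ Set.Ico (3/4 : ℝ) 1) :
    ∃ c : ℝ, 0 < c ∧ ∀ lam : ℝ, lam ∈ Set.Ioc (0 : ℝ) 1 →
      ENNReal.ofReal (c * lam ^ (-(4 * H - 3))) ≤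
        ∫⁻ X : Fin 2 → ℝ,
          ENNReal.ofReal (|X 0| ^ (1 - 2 * H) *
            |lam * X 1 - Real.sqrt (1 - lam ^ 2) * X 0| ^ (1 - 2 * H))
          ∂(stdGaussianPi 2) := by
  obtain ⟨hH1, hH2⟩ := hH
  set c1 : ℝ := (Real.sqrt (2 * Real.pi))⁻¹ * Real.exp (-2) with hc1
  have hc1pos : 0 < c1 := by positivity
  set a : ℝ := 1 - 2 * H with ha
  have haneg : a ≤ 0 := by simp only [ha]; linarith
  refine ⟨(2:ℝ) ^ a * (c1 * (1/2) * c1), by positivity, ?_⟩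
  rintro lam ⟨hl0, hl1⟩
  set μ : ℝ := Real.sqrt (1 - lam ^ 2) with hμ
  have hμ0 : 0 ≤ μ := Real.sqrt_nonneg _
  have hμ1 : μ ≤ 1 := Real.sqrt_le_one.mpr (by nlinarith)
  set B : Fin 2 → Set ℝ := fun i => if i = 0 then Set.Ioc (lam / 2) lam else Set.Ioc 1 2 with hB
  have hBmeas : ∀ i, MeasurableSet (B i) := by
    intro i; simp only [hB]; split <;> exact measurableSet_Ioc
  set S := Set.univ.pi B with hS
  have hSmeas : MeasurableSet S := MeasurableSet.univ_pi hBmeas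
  set v : ℝ≥0∞ := ENNReal.ofReal (lam ^ a * (2 * lam) ^ a) with hv
  -- pointwise bound on S
  have hpt : ∀ X : Fin 2 → ℝ, S.indicator (fun _ => v) X ≤
      ENNReal.ofReal (|X 0| ^ a * |lam * X 1 - μ * X 0| ^ a) := by
    intro X
    by_cases hXS : X ∈ S
    · rw [Set.indicator_of_mem hXS]
      have h0 : X 0 ∈ Set.Ioc (lam / 2) lam := by
        have := hXS 0 (Set.mem_univ 0); simpa [hB] using this
      have h1 : X 1 ∈ Set.Ioc (1:ℝ) 2 := by
        have := hXS 1 (Set.mem_univ 1); simpa [hB] using this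
      have hX0pos : 0 < X 0 := lt_trans (by positivity) h0.1
      have hzpos : 0 < lam * X 1 - μ * X 0 := by
        have h1' : lam < lam * X 1 := by nlinarith [h1.1]
        have h2' : μ * X 0 ≤ lam := by nlinarith [h0.2]
        linarith
      have hzle : lam * X 1 - μ * X 0 ≤ 2 * lam := by nlinarith [h1.2, hX0pos]
      rw [hv, abs_of_pos hX0pos, abs_of_pos hzpos]
      apply ENNReal.ofReal_le_ofReal
      have e1 : lam ^ a ≤ X 0 ^ a := Real.rpow_le_rpow_of_nonpos hX0pos h0.2 haneg
      have e2 : (2 * lam) ^ a ≤ (lam * X 1 - μ * X 0) ^ a :=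
        Real.rpow_le_rpow_of_nonpos hzpos hzle haneg
      exact mul_le_mul e1 e2 (Real.rpow_nonneg (by positivity) a) (Real.rpow_nonneg hX0pos.le a)
    · rw [Set.indicator_of_notMem hXS]; exact zero_le
  -- measure lower bound
  have hmes : ENNReal.ofReal (c1 * (lam / 2)) * ENNReal.ofReal (c1 * 1) ≤ stdGaussianPi 2 S := by
    have hpi : stdGaussianPi 2 S = ∏ i : Fin 2, gaussianReal 0 1 (B i) := by
      rw [hS, stdGaussianPi, Measure.pi_pi]
    rw [hpi, Fin.prod_univ_two]
    have hB0 : B 0 = Set.Ioc (lam / 2) lam := by simp [hB]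
    have hB1 : B 1 = Set.Ioc (1:ℝ) 2 := by simp [hB]
    rw [hB0, hB1]
    apply mul_le_mul'
    · have := gauss_Ioc_lb (a := lam / 2) (b := lam) (by linarith) (by linarith) (by linarith)
      calc ENNReal.ofReal (c1 * (lam / 2)) = ENNReal.ofReal (c1 * (lam - lam / 2)) := by
            ring_nf
        _ ≤ _ := this
    · have := gauss_Ioc_lb (a := (1:ℝ)) (b := 2) (by norm_num) (by norm_num) (by norm_num)
      calc ENNReal.ofReal (c1 * 1) = ENNReal.ofReal (c1 * (2 - 1)) := by norm_num
        _ ≤ _ := this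
  -- arithmetic identity
  have key : (2:ℝ) ^ a * (c1 * (1/2) * c1) * lam ^ (-(4 * H - 3)) =
      lam ^ a * (2 * lam) ^ a * (c1 * (lam / 2) * (c1 * 1)) := by
    have h2 : ((2:ℝ) * lam) ^ a = 2 ^ a * lam ^ a :=
      Real.mul_rpow (by norm_num) hl0.le
    have hexp : -(4 * H - 3) = a + (a + 1) := by rw [ha]; ring
    rw [h2, hexp, Real.rpow_add hl0, Real.rpow_add hl0, Real.rpow_one]
    ring
  calc ENNReal.ofReal ((2:ℝ) ^ a * (c1 * (1/2) * c1) * lam ^ (-(4 * H - 3)))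
      = ENNReal.ofReal (lam ^ a * (2 * lam) ^ a * (c1 * (lam / 2) * (c1 * 1))) := by rw [key]
    _ = v * (ENNReal.ofReal (c1 * (lam / 2)) * ENNReal.ofReal (c1 * 1)) := by
        rw [hv, ENNReal.ofReal_mul (by positivity), ENNReal.ofReal_mul (by positivity),
          ENNReal.ofReal_mul (by positivity : (0:ℝ) ≤ c1 * (lam / 2))]
    _ ≤ v * stdGaussianPi 2 S := by
        exact mul_le_mul_right hmes v
    _ = ∫⁻ X, S.indicator (fun _ => v) X ∂(stdGaussianPi 2) := by
        rw [lintegral_indicator_const hSmeas]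
    _ ≤ ∫⁻ X : Fin 2 → ℝ,
          ENNReal.ofReal (|X 0| ^ a * |lam * X 1 - μ * X 0| ^ a) ∂(stdGaussianPi 2) :=
        lintegral_mono hpt
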